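/- Let g(x) := x − 1 − ln x for x > 0, and let f : (0,∞) → (0,∞) be a function such that f is (strictly) increasing on (0,∞) and I ↦ f(I)/I is nonincreasing on (0,∞). Then for all I > 0 and I* > 0, g(f(I)/f(I*)) − g(I/I*) ≤ (1 − f(I*)/f(I))·(f(I)/f(I*) − I/I*) ≤ 0; in particular g(f(I)/f(I*)) ≤ g(I/I*). -/

import Mathlib

open Real

/-- **Key Volterra-type inequality** (used in Step 4 of the proof of Theorem 3.1).
Let `g(x) = x − 1 − ln x` and let `f : (0,∞) → (0,∞)` be strictly increasing with
`I ↦ f(I)/I` nonincreasing.  Then for all `I, I* > 0`,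
`g(f(I)/f(I*)) − g(I/I*) ≤ (1 − f(I*)/f(I))(f(I)/f(I*) − I/I*) ≤ 0`; in particular
`g(f(I)/f(I*)) ≤ g(I/I*)`. -/
theorem g_f_ratio_le
    (g : ℝ → ℝ) (hg : ∀ x : ℝ, g x = x - 1 - Real.log x)
    (f : ℝ → ℝ) (hfpos : ∀ x : ℝ, 0 < x → 0 < f x)
    (hfmono : ∀ x y : ℝ, 0 < x → x < y → f x < f y)
    (hfratio : ∀ x y : ℝ, 0 < x → x ≤ y → f y / y ≤ f x / x) :
    ∀ I Istar : ℝ, 0 < I → 0 < Istar →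
      (g (f I / f Istar) - g (I / Istar) ≤
        (1 - f Istar / f I) * (f I / f Istar - I / Istar)) ∧
      (1 - f Istar / f I) * (f I / f Istar - I / Istar) ≤ 0 ∧
      g (f I / f Istar) ≤ g (I / Istar) := by
  intro I Istar hI hIs
  have hp : 0 < f I := hfpos I hI
  have hq : 0 < f Istar := hfpos Istar hIs
  set a : ℝ := f I / f Istar with ha
  set b : ℝ := I / Istar with hb
  set c : ℝ := f Istar / f I with hc
  have hapos : 0 < a := by positivity
  have hbpos : 0 < b := by positivity
  have hca : c * a = 1 := by rw [hc, ha]; field_simp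
  have hba : b / a = c * b := by
    field_simp [ha, hb, hc]
    linarith [hca, mul_comm a c]
  -- first inequality
  have hlog : Real.log (b / a) ≤ b / a - 1 :=
    Real.log_le_sub_one_of_pos (by positivity)
  have hlogdiv : Real.log (b / a) = Real.log b - Real.log a :=
    Real.log_div (ne_of_gt hbpos) (ne_of_gt hapos)
  have h1 : g a - g b ≤ (1 - c) * (a - b) := by
    rw [hg, hg]
    have : Real.log b - Real.log a ≤ c * b - 1 := by
      rw [← hlogdiv, ← hba]; exact hlog
    nlinarith [hca]
  -- second inequality
  have h2 : (1 - c) * (a - b) ≤ 0 := by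
    rcases le_or_gt I Istar with h | h
    · have hcge : 1 ≤ c := by
        rcases eq_or_lt_of_le h with rfl | hlt
        · rw [hc, div_self (ne_of_gt hp)]
        · have := hfmono I Istar hI hlt
          rw [hc]; exact (one_le_div hp).mpr (le_of_lt this)
      have hab : b ≤ a := by
        have := hfratio I Istar hI h
        rw [ha, hb]
        rw [div_le_div_iff₀ hIs hI] at this
        rw [div_le_div_iff₀ hIs hq]
        nlinarith
      nlinarith
    · have hcle : c ≤ 1 := by
        have := hfmono Istar I hIs h
        rw [hc]; exact (div_le_one hp).mpr (le_of_lt this)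
      have hab : a ≤ b := by
        have := hfratio Istar I hIs (le_of_lt h)
        rw [ha, hb]
        rw [div_le_div_iff₀ hI hIs] at this
        rw [div_le_div_iff₀ hq hIs]
        nlinarith
      nlinarith
  exact ⟨h1, h2, by linarith⟩
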